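/- arXiv:2109.12401 — 5 statements merged into one kernel-verified Lean document; each statement's English description precedes it below -/
import Mathlib

section
/- Let γ ∈ [1, 3/2) be real and let (R_ℓ)_{ℓ≥0} be a sequence of positive reals satisfying R_ℓ ≥ ((γ-1)/(3-2γ)) · Σ_{k=0}^{ℓ-1} R_k for every ℓ ≥ 1. Then for every ℓ ≥ 1 it holds that R_ℓ ≥ ((γ-1)/(2-γ)) · ((2-γ)/(3-2γ))^ℓ · R_0. -/
theorem stmt_0 (γ : ℝ) (hγ1 : 1 ≤ γ) (hγ2 : γ < 3/2)
    (R : ℕ → ℝ) (hpos : ∀ ℓ, 0 < R ℓ)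
    (hrec : ∀ ℓ : ℕ, 1 ≤ ℓ → R ℓ ≥ (γ - 1) / (3 - 2*γ) * ∑ k ∈ Finset.range ℓ, R k) :
    ∀ ℓ : ℕ, 1 ≤ ℓ →
      R ℓ ≥ (γ - 1) / (2 - γ) * ((2 - γ) / (3 - 2*γ))^ℓ * R 0 := by
  have h3 : 0 < 3 - 2*γ := by linarith
  have h2 : 0 < 2 - γ := by linarith
  have hr : 0 ≤ (2-γ)/(3-2*γ) := by positivity
  have key : ∀ ℓ : ℕ, 1 ≤ ℓ →
      (∑ k ∈ Finset.range ℓ, R k) ≥ ((2-γ)/(3-2*γ))^(ℓ-1) * R 0 := by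
    intro ℓ hℓ
    induction ℓ, hℓ using Nat.le_induction with
    | base => simp
    | succ n hn ih =>
      rw [Finset.sum_range_succ]
      have h1 := hrec n hn
      have step : (∑ k ∈ Finset.range n, R k) + R n
          ≥ (2-γ)/(3-2*γ) * ∑ k ∈ Finset.range n, R k := by
        have heq : (2-γ)/(3-2*γ) = 1 + (γ-1)/(3-2*γ) := by field_simp; ring
        rw [heq]; nlinarith
      have hexp : n + 1 - 1 = (n - 1) + 1 := by omega
      rw [hexp, pow_succ]
      calc ((2-γ)/(3-2*γ))^(n-1) * ((2-γ)/(3-2*γ)) * R 0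
          = (2-γ)/(3-2*γ) * (((2-γ)/(3-2*γ))^(n-1) * R 0) := by ring
        _ ≤ (2-γ)/(3-2*γ) * ∑ k ∈ Finset.range n, R k :=
            mul_le_mul_of_nonneg_left ih hr
        _ ≤ _ := step
  intro ℓ hℓ
  have hs := key ℓ hℓ
  have h1 := hrec ℓ hℓ
  have ha : 0 ≤ (γ-1)/(3-2*γ) := div_nonneg (by linarith) (by linarith)
  have heq : (γ-1)/(2-γ) * ((2-γ)/(3-2*γ))^ℓ * R 0
      = (γ-1)/(3-2*γ) * (((2-γ)/(3-2*γ))^(ℓ-1) * R 0) := by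
    have hexp : ℓ = (ℓ-1) + 1 := by omega
    rw [hexp, pow_succ, Nat.add_sub_cancel]
    field_simp
  rw [heq]
  calc (γ-1)/(3-2*γ) * (((2-γ)/(3-2*γ))^(ℓ-1) * R 0)
      ≤ (γ-1)/(3-2*γ) * ∑ k ∈ Finset.range ℓ, R k :=
        mul_le_mul_of_nonneg_left hs ha
    _ ≤ R ℓ := h1
end

section
/- Let γ ∈ [1, 3/2) and let (R_ℓ)_{ℓ≥0}, (Ĥ_ℓ)_{ℓ≥0} be sequences of reals with R_ℓ > 0 for all ℓ. Suppose that for every ℓ ≥ 1 we have 2(Ĥ_ℓ - R_ℓ) ≤ R_ℓ - Σ_{k=0}^{ℓ-1}(Ĥ_k - R_k), and that Ĥ_k ≥ γ R_k for all k. Then for every ℓ ≥ 1, R_ℓ ≥ ((γ-1)/(3-2γ)) · Σ_{k=0}^{ℓ-1} R_k. -/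
theorem stmt_2 (γ : ℝ) (hγ1 : 1 ≤ γ) (hγ2 : γ < 3/2)
    (R H : ℕ → ℝ) (hpos : ∀ ℓ, 0 < R ℓ)
    (hbound : ∀ ℓ : ℕ, 1 ≤ ℓ →
      2 * (H ℓ - R ℓ) ≤ R ℓ - ∑ k ∈ Finset.range ℓ, (H k - R k))
    (hγR : ∀ k, H k ≥ γ * R k) :
    ∀ ℓ : ℕ, 1 ≤ ℓ →
      R ℓ ≥ (γ - 1) / (3 - 2*γ) * ∑ k ∈ Finset.range ℓ, R k := by
  intro ℓ hℓ
  have h := hbound ℓ hℓ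
  have hsum : ∑ k ∈ Finset.range ℓ, (γ - 1) * R k ≤ ∑ k ∈ Finset.range ℓ, (H k - R k) := by
    apply Finset.sum_le_sum
    intro k _
    have := hγR k
    nlinarith [hpos k]
  rw [← Finset.mul_sum] at hsum
  have hHl := hγR ℓ
  have h32 : 0 < 3 - 2 * γ := by linarith
  rw [ge_iff_le, div_mul_eq_mul_div, div_le_iff₀ h32]
  nlinarith [hpos ℓ]
end

section
/- Define for natural numbers m ≥ 1 and 1 ≤ i ≤ m the real number F_i(m) = [ (√2+1)^{m+1} (1 - ((2-√2)/2)^i) + (√2-1)^{m+1} (1 - ((2+√2)/2)^i) ] / [ (√2-1)^{m+1} + (√2+1)^{m+1} ]. Then F_i(m) is nondecreasing in i, i.e., F_{i+1}(m) ≥ F_i(m) for all 1 ≤ i ≤ m-1. -/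
noncomputable def F (m i : ℕ) : ℝ :=
  ((Real.sqrt 2 + 1)^(m+1) * (1 - ((2 - Real.sqrt 2)/2)^i)
   + (Real.sqrt 2 - 1)^(m+1) * (1 - ((2 + Real.sqrt 2)/2)^i))
  / ((Real.sqrt 2 - 1)^(m+1) + (Real.sqrt 2 + 1)^(m+1))

theorem stmt_8 (m : ℕ) (hm : 1 ≤ m) :
    ∀ i : ℕ, 1 ≤ i → i ≤ m - 1 → F m (i+1) ≥ F m i := by
  intro i hi him
  unfold F
  set s := Real.sqrt 2 with hsdef
  have hs2 : s^2 = 2 := Real.sq_sqrt (by norm_num)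
  have hs1 : 1 < s := by
    nlinarith [Real.sqrt_nonneg 2]
  have hk : m + 1 = i + (m + 1 - i) := by omega
  set k := m + 1 - i with hkdef
  have hk2 : 2 ≤ k := by omega
  rw [ge_iff_le]
  have hD : (0:ℝ) < (s - 1)^(m+1) + (s + 1)^(m+1) :=
    add_pos (pow_pos (by linarith) _) (pow_pos (by linarith) _)
  rw [div_le_div_iff_of_pos_right hD]
  have ha : ((2:ℝ) - s)/2 = (s-1)*(s/2) := by linear_combination (-(1:ℝ)/2) * hs2
  have hb : ((2:ℝ) + s)/2 = (s+1)*(s/2) := by linear_combination (-(1:ℝ)/2) * hs2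
  have hAB : (s-1)^i * (s+1)^i = 1 := by
    rw [← mul_pow]
    rw [show (s-1)*(s+1) = 1 by linear_combination hs2]
    simp
  have hT : (0:ℝ) ≤ (s/2)^i := by positivity
  have hCD : (s-1)^k ≤ (s+1)^k := pow_le_pow_left₀ (by linarith) (by linarith) k
  rw [hk, pow_add, pow_add, ha, hb]
  simp only [pow_succ, mul_pow]
  have key : (s+1)^i*(s+1)^k*(1-(s-1)^i*(s/2)^i*((s-1)*(s/2)))
      + (s-1)^i*(s-1)^k*(1-(s+1)^i*(s/2)^i*((s+1)*(s/2)))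
      - ((s+1)^i*(s+1)^k*(1-(s-1)^i*(s/2)^i) + (s-1)^i*(s-1)^k*(1-(s+1)^i*(s/2)^i))
      = (s/2)*(s/2)^i*((s+1)^k-(s-1)^k) := by
    linear_combination ((s/2)^i * ((s+1)^k*(1-(s^2-s)/2) + (s-1)^k*(1-(s^2+s)/2))) * hAB
      + (-(s/2)^i*((s+1)^k+(s-1)^k)/2) * hs2
  have hnn : 0 ≤ (s/2)*(s/2)^i*((s+1)^k-(s-1)^k) := by
    apply mul_nonneg (mul_nonneg (by linarith) hT)
    linarith
  nlinarith [key, hnn]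
end

section
/- With F_i(m) as defined (F_i(m) = [ (√2+1)^{m+1}(1 - ((2-√2)/2)^i) + (√2-1)^{m+1}(1 - ((2+√2)/2)^i) ] / [ (√2-1)^{m+1} + (√2+1)^{m+1} ]), setting f_1(m) = F_1(m) - 0 = F_1(m), the quantity F_1(m) + f_1(m) = 2F_1(m) converges to √2 as m → ∞. -/
theorem stmt_9 :
    Filter.Tendsto (fun m : ℕ => 2 * F m 1) Filter.atTop (nhds (Real.sqrt 2)) := by
  have hs : Real.sqrt 2 ^ 2 = 2 := Real.sq_sqrt (by norm_num)
  have hs1 : 1 < Real.sqrt 2 := by nlinarith [Real.sqrt_nonneg 2]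
  set s := Real.sqrt 2 with hsdef
  have hq0 : 0 < (s - 1) / (s + 1) := div_pos (by linarith) (by linarith)
  have hq : |((s - 1) / (s + 1))| < 1 := by
    rw [abs_of_pos hq0, div_lt_one (by linarith)]; linarith
  have h0 : Filter.Tendsto (fun m : ℕ => ((s - 1) / (s + 1)) ^ (m + 1))
      Filter.atTop (nhds 0) := by
    exact (tendsto_pow_atTop_nhds_zero_of_abs_lt_one hq).comp
      (Filter.tendsto_add_atTop_nat 1)
  have hlim : Filter.Tendsto
      (fun m : ℕ => s * (1 - ((s - 1) / (s + 1)) ^ (m + 1)) / (1 + ((s - 1) / (s + 1)) ^ (m + 1)))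
      Filter.atTop (nhds s) := by
    have hnum : Filter.Tendsto (fun m : ℕ => s * (1 - ((s - 1) / (s + 1)) ^ (m + 1)))
        Filter.atTop (nhds (s * (1 - 0))) :=
      (tendsto_const_nhds.sub h0).const_mul s
    have hden : Filter.Tendsto (fun m : ℕ => 1 + ((s - 1) / (s + 1)) ^ (m + 1))
        Filter.atTop (nhds (1 + 0)) := tendsto_const_nhds.add h0
    have := hnum.div hden (by norm_num)
    simpa [Pi.div_def] using this
  refine hlim.congr (fun m => ?_)
  have hA : (0:ℝ) < (s + 1) ^ (m + 1) := by positivity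
  have hB : (0:ℝ) < (s - 1) ^ (m + 1) := pow_pos (by linarith) _
  have hqm : (0:ℝ) < ((s - 1) / (s + 1)) ^ (m + 1) := pow_pos hq0 _
  unfold F
  rw [← hsdef]
  rw [div_pow]
  field_simp
  ring_nf
end

section
/- Let n ≥ 1 and let w, R, D : Fin n → ℝ with w_k > 0 and D_k ≥ 0. Say an allocation r : Fin n → ℝ≥0 with r_k ≤ D_k is 'locally fair' (with respect to totals R, weights w, demands D, and guarantees g : Fin n → ℝ≥0) if for every pair of users i ≠ j with r_i > g_i and r_j < D_j, it holds that (R_i + r_i)/w_i ≤ (R_j + r_j)/w_j. Suppose r̄ is locally fair w.r.t. (R̄, w, D̄, g) and r̂ is locally fair w.r.t. (R̂, w, D̂, g), and suppose users i ≠ j satisfy: r̄_i < r̂_i, D̂_i ≤ D̄_i, r̄_j > r̂_j, D̄_j ≤ D̂_j, and g_i ≤ r̄_i. Then (R̄_i + r̄_i)/w_i ≥ (R̄_j + r̄_j)/w_j and (R̂_i + r̂_i)/w_i ≤ (R̂_j + r̂_j)/w_j; consequently (R̂_i + r̂_i - R̄_i - r̄_i)/w_i ≤ (R̂_j + r̂_j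 - R̄_j - r̄_j)/w_j. -/
/-- `r` is a locally fair allocation w.r.t. prior totals `R`, weights `w`,
demands `D`, and guarantees `g`. -/
def LocallyFair {n : ℕ} (w R D g r : Fin n → ℝ) : Prop :=
  (∀ k, 0 ≤ r k ∧ r k ≤ D k) ∧
  ∀ i j, i ≠ j → g i < r i → r j < D j →
    (R i + r i) / w i ≤ (R j + r j) / w j

theorem stmt_11 {n : ℕ} (hn : 1 ≤ n)
    (w Rbar Rhat Dbar Dhat g : Fin n → ℝ) (rbar rhat : Fin n → ℝ)
    (hw : ∀ k, 0 < w k) (hD : ∀ k, 0 ≤ Dbar k ∧ 0 ≤ Dhat k) (hg : ∀ k, 0 ≤ g k)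
    (hbar : LocallyFair w Rbar Dbar g rbar)
    (hhat : LocallyFair w Rhat Dhat g rhat)
    (i j : Fin n) (hij : i ≠ j)
    (hri : rbar i < rhat i) (hDi : Dhat i ≤ Dbar i)
    (hrj : rhat j < rbar j) (hDj : Dbar j ≤ Dhat j)
    (hgi : g i ≤ rbar i) (hgj : g j ≤ rhat j) :
    (Rbar i + rbar i) / w i ≥ (Rbar j + rbar j) / w j ∧
    (Rhat i + rhat i) / w i ≤ (Rhat j + rhat j) / w j ∧
    (Rhat i + rhat i - Rbar i - rbar i) / w i
      ≤ (Rhat j + rhat j - Rbar j - rbar j) / w j := by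
  obtain ⟨hbarD, hbarF⟩ := hbar
  obtain ⟨hhatD, hhatF⟩ := hhat
  have h1 : (Rbar j + rbar j) / w j ≤ (Rbar i + rbar i) / w i :=
    hbarF j i hij.symm (lt_of_le_of_lt hgj hrj)
      (lt_of_lt_of_le hri (le_trans (hhatD i).2 hDi))
  have h2 : (Rhat i + rhat i) / w i ≤ (Rhat j + rhat j) / w j :=
    hhatF i j hij (lt_of_le_of_lt hgi hri)
      (lt_of_lt_of_le hrj (le_trans (hbarD j).2 hDj))
  refine ⟨h1, h2, ?_⟩
  have e1 : (Rhat i + rhat i - Rbar i - rbar i) / w i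
      = (Rhat i + rhat i) / w i - (Rbar i + rbar i) / w i := by ring
  have e2 : (Rhat j + rhat j - Rbar j - rbar j) / w j
      = (Rhat j + rhat j) / w j - (Rbar j + rbar j) / w j := by ring
  rw [e1, e2]
  linarith
end
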